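/- Let m ≥ 1 and let S be a nonempty subset of the Euclidean space ℝ^m. Then the following are equivalent: (i) there exists a finite set U₀ ⊆ ℝ^m of cardinality m − 1 such that for all a, b ∈ S, if ⟨a − b, u⟩ = 0 for every u ∈ U₀ then a = b; (ii) there exists a unit vector v ∈ ℝ^m (‖v‖ = 1) that is not a unit secant of S, i.e. v ≠ (a − b)/‖a − b‖ for all a, b ∈ S with a ≠ b. -/

import Mathlib

/-- For a nonempty set `S ⊆ ℝ^m`, there is a universal distinguishing set of `m − 1` vectors
(i.e. a finite set `U₀` of cardinality `m − 1` such that any two points of `S` whose difference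
is orthogonal to all of `U₀` coincide) if and only if some unit vector of `ℝ^m` is not a unit
secant of `S`. -/
theorem distinguishing_set_card_pred_iff_secants_not_whole_sphere
    (m : ℕ) (hm : 1 ≤ m) (S : Set (EuclideanSpace ℝ (Fin m))) (hS : S.Nonempty) :
    (∃ U₀ : Finset (EuclideanSpace ℝ (Fin m)), U₀.card = m - 1 ∧
        ∀ a ∈ S, ∀ b ∈ S, (∀ u ∈ U₀, @inner ℝ _ _ (a - b) u = (0 : ℝ)) → a = b) ↔
    (∃ v : EuclideanSpace ℝ (Fin m), ‖v‖ = 1 ∧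
        ∀ a ∈ S, ∀ b ∈ S, a ≠ b → v ≠ ‖a - b‖⁻¹ • (a - b)) := by
  classical
  constructor
  · rintro ⟨U₀, hcard, hU⟩
    set K : Submodule ℝ (EuclideanSpace ℝ (Fin m)) :=
      Submodule.span ℝ (U₀ : Set (EuclideanSpace ℝ (Fin m))) with hK
    have hfr : Module.finrank ℝ K ≤ m - 1 := by
      have h0 : Module.finrank ℝ K ≤ U₀.card := finrank_span_finset_le_card U₀
      rw [hcard] at h0; exact h0
    have hKne : K ≠ ⊤ := by
      intro h
      rw [h] at hfr
      have htop : Module.finrank ℝ (⊤ : Submodule ℝ (EuclideanSpace ℝ (Fin m))) = m := by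
        rw [finrank_top, finrank_euclideanSpace_fin]
      omega
    have hbot : Kᗮ ≠ ⊥ := fun h => hKne (Submodule.orthogonal_eq_bot_iff.mp h)
    obtain ⟨w, hwK, hw0⟩ := (Submodule.ne_bot_iff Kᗮ).mp hbot
    refine ⟨‖w‖⁻¹ • w, ?_, ?_⟩
    · rw [norm_smul, norm_inv, norm_norm, inv_mul_cancel₀ (norm_ne_zero_iff.mpr hw0)]
    · intro a ha b hb hab hv
      apply hab
      apply hU a ha b hb
      intro u hu
      have habw : (‖a - b‖ * ‖w‖⁻¹) • w = a - b := by
        have h1 : ‖a - b‖ • (‖a - b‖⁻¹ • (a - b)) = a - b := by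
          rw [smul_smul, mul_inv_cancel₀ (norm_ne_zero_iff.mpr (sub_ne_zero.mpr hab)), one_smul]
        rw [← smul_smul, hv, h1]
      have hwu : @inner ℝ _ _ w u = 0 := by
        have h2 := hwK u (Submodule.subset_span hu)
        rwa [real_inner_comm] at h2
      rw [← habw, real_inner_smul_left, hwu, mul_zero]
  · rintro ⟨v, hv1, hv⟩
    have hv0 : v ≠ 0 := fun h => by simp [h] at hv1
    set K : Submodule ℝ (EuclideanSpace ℝ (Fin m)) := (ℝ ∙ v)ᗮ with hK
    have hfrv : Module.finrank ℝ (ℝ ∙ v) = 1 := finrank_span_singleton hv0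
    have hfrK : Module.finrank ℝ K = m - 1 := by
      have h := (ℝ ∙ v).finrank_add_finrank_orthogonal
      rw [hfrv, finrank_euclideanSpace_fin] at h
      rw [hK]
      omega
    let b : Module.Basis (Fin (m - 1)) ℝ K := Module.finBasisOfFinrankEq ℝ K hfrK
    have hinj : Function.Injective (fun i => (b i : EuclideanSpace ℝ (Fin m))) :=
      Subtype.val_injective.comp b.injective
    refine ⟨Finset.image (fun i => (b i : EuclideanSpace ℝ (Fin m))) Finset.univ, ?_, ?_⟩
    · rw [Finset.card_image_of_injective _ hinj, Finset.card_univ, Fintype.card_fin]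
    · intro a ha c hc horth
      by_contra hac
      have hspan : Submodule.span ℝ
          (Set.range fun i => (b i : EuclideanSpace ℝ (Fin m))) = K := by
        have h1 : (Set.range fun i => (b i : EuclideanSpace ℝ (Fin m)))
            = K.subtype '' Set.range b := by
          ext x; simp [Set.range_comp]
        rw [h1, ← Submodule.map_span, b.span_eq, Submodule.map_subtype_top]
      have hle : K ≤ (ℝ ∙ (a - c))ᗮ := by
        rw [← hspan]
        apply Submodule.span_le.mpr
        rintro x ⟨i, rfl⟩
        rw [SetLike.mem_coe, Submodule.mem_orthogonal_singleton_iff_inner_right]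
        exact horth _ (Finset.mem_image.mpr ⟨i, Finset.mem_univ i, rfl⟩)
      have hmem : a - c ∈ Kᗮ := by
        apply Submodule.orthogonal_le hle
        exact (ℝ ∙ (a - c)).le_orthogonal_orthogonal (Submodule.mem_span_singleton_self _)
      rw [hK, Submodule.orthogonal_orthogonal, Submodule.mem_span_singleton] at hmem
      obtain ⟨r, hr⟩ := hmem
      have hr0 : r ≠ 0 := by
        intro h; rw [h, zero_smul] at hr; exact hac (sub_eq_zero.mp hr.symm)
      rcases lt_or_gt_of_ne hr0 with hneg | hpos
      · refine hv c hc a ha (Ne.symm hac) ?_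
        have h3 : c - a = (-r) • v := by rw [neg_smul, hr, neg_sub]
        rw [h3, norm_smul, Real.norm_eq_abs, hv1, mul_one, abs_of_pos (by linarith),
          smul_smul, inv_mul_cancel₀ (by linarith), one_smul]
      · refine hv a ha c hc hac ?_
        rw [← hr, norm_smul, Real.norm_eq_abs, hv1, mul_one, abs_of_pos hpos,
          smul_smul, inv_mul_cancel₀ (ne_of_gt hpos), one_smul]
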